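/- arXiv:1812.04836 — 2 statements merged into one kernel-verified Lean document; each statement's English description precedes it below -/
import Mathlib

section
/- Let m > 0, d ≥ 1, and 0 < δ < m. For each N ≥ 1, the set R of parameters ν ∈ [1,2]^d for which there exists n ∈ ℤ^d with |n| ≤ N (sup norm) and |∑_{i=1}^d ν_i² n_i² − m| ≤ δ has Lebesgue measure at most C·N^d·δ^{1/2}, where C = C(d,m) depends only on d and m. -/
open MeasureTheory

lemma aux_pair {c r m δ x y : ℝ} (hc : 1 ≤ c) (hx : 1 ≤ x) (hy : 1 ≤ y) (hδ : 0 < δ)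
    (h1 : |x ^ 2 * c + r - m| ≤ δ) (h2 : |y ^ 2 * c + r - m| ≤ δ) : x - y ≤ δ := by
  obtain ⟨h1a, h1b⟩ := abs_le.mp h1
  obtain ⟨h2a, h2b⟩ := abs_le.mp h2
  by_contra h
  push_neg at h
  have hxy : 0 < x - y := hδ.trans h
  have hk : (x ^ 2 - y ^ 2) * c ≤ 2 * δ := by nlinarith
  nlinarith [mul_nonneg (mul_nonneg hxy.le (by linarith : (0:ℝ) ≤ x + y - 2))
      (by linarith : (0:ℝ) ≤ c),
    mul_nonneg (mul_nonneg hxy.le (by norm_num : (0:ℝ) ≤ 2)) (by linarith : (0:ℝ) ≤ c - 1)]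

lemma aux_slice (d' : ℕ) (m δ : ℝ) (hδ : 0 < δ) (n : Fin (d' + 1) → ℤ)
    (j : Fin (d' + 1)) (hj : n j ≠ 0) :
    volume {ν : Fin (d' + 1) → ℝ | (∀ i, ν i ∈ Set.Icc (1 : ℝ) 2) ∧
      |∑ i, (ν i) ^ 2 * (n i : ℝ) ^ 2 - m| ≤ δ} ≤ ENNReal.ofReal δ := by
  set S := {ν : Fin (d' + 1) → ℝ | (∀ i, ν i ∈ Set.Icc (1 : ℝ) 2) ∧
      |∑ i, (ν i) ^ 2 * (n i : ℝ) ^ 2 - m| ≤ δ} with hS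
  have hSmeas : MeasurableSet S := by
    have h1 : IsClosed {ν : Fin (d'+1) → ℝ | ∀ i, ν i ∈ Set.Icc (1:ℝ) 2} := by
      have he : {ν : Fin (d'+1) → ℝ | ∀ i, ν i ∈ Set.Icc (1:ℝ) 2}
          = Set.pi Set.univ (fun _ => Set.Icc (1:ℝ) 2) := by
        ext ν
        simp only [Set.mem_setOf_eq, Set.mem_pi, Set.mem_univ, true_implies]
      rw [he]; exact isClosed_set_pi (fun i _ => isClosed_Icc)
    have h2 : IsClosed {ν : Fin (d'+1) → ℝ | |∑ i, (ν i)^2 * (n i : ℝ)^2 - m| ≤ δ} := by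
      have hc : Continuous fun ν : Fin (d'+1) → ℝ => |∑ i, (ν i)^2 * (n i:ℝ)^2 - m| := by
        fun_prop
      exact isClosed_le hc continuous_const
    exact (h1.inter h2).measurableSet
  have hc1 : (1 : ℝ) ≤ (n j : ℝ) ^ 2 := by
    have h1 : (1 : ℤ) ≤ |n j| := Int.one_le_abs hj
    have h2 : (1 : ℝ) ≤ |(n j : ℝ)| := by exact_mod_cast (by simpa using h1)
    nlinarith [sq_abs ((n j : ℝ)), abs_nonneg ((n j : ℝ))]
  set e := MeasurableEquiv.piFinSuccAbove (fun _ : Fin (d'+1) => ℝ) j with he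
  have hmp : MeasurePreserving e.symm :=
    (volume_preserving_piFinSuccAbove (fun _ : Fin (d'+1) => ℝ) j).symm e
  have hkey : volume S = (volume : Measure (ℝ × (Fin d' → ℝ))) (e.symm ⁻¹' S) :=
    (hmp.measure_preimage hSmeas.nullMeasurableSet).symm
  have hsymm : ∀ x (w : Fin d' → ℝ), e.symm (x, w) = j.insertNth x w := by
    intro x w
    simp [he, MeasurableEquiv.piFinSuccAbove, Fin.insertNthEquiv]
  have hcube : MeasurableSet (Set.pi Set.univ fun _ : Fin d' => Set.Icc (1:ℝ) 2) :=
    MeasurableSet.univ_pi fun _ => measurableSet_Icc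
  have hslice : ∀ w : Fin d' → ℝ, volume {x : ℝ | e.symm (x, w) ∈ S} ≤
      Set.indicator (Set.pi Set.univ fun _ : Fin d' => Set.Icc (1:ℝ) 2)
        (fun _ => ENNReal.ofReal δ) w := by
    intro w
    by_cases hw : w ∈ Set.pi Set.univ fun _ : Fin d' => Set.Icc (1:ℝ) 2
    · rw [Set.indicator_of_mem hw]
      refine le_trans (Real.volume_le_diam _) (EMetric.diam_le ?_)
      intro x hx y hy
      rw [Set.mem_setOf_eq, hsymm, hS, Set.mem_setOf_eq] at hx hy
      obtain ⟨hx1, hx2⟩ := hx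
      obtain ⟨hy1, hy2⟩ := hy
      have hxj := hx1 j; rw [Fin.insertNth_apply_same] at hxj
      have hyj := hy1 j; rw [Fin.insertNth_apply_same] at hyj
      rw [Fin.sum_univ_succAbove _ j] at hx2 hy2
      simp only [Fin.insertNth_apply_same, Fin.insertNth_apply_succAbove] at hx2 hy2
      have hd : |x - y| ≤ δ := by
        rw [abs_sub_le_iff]
        exact ⟨aux_pair hc1 hxj.1 hyj.1 hδ hx2 hy2, aux_pair hc1 hyj.1 hxj.1 hδ hy2 hx2⟩
      rw [edist_dist, Real.dist_eq]
      exact ENNReal.ofReal_le_ofReal hd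
    · rw [Set.indicator_of_notMem hw]
      have hempty : {x : ℝ | e.symm (x, w) ∈ S} = ∅ := by
        ext x
        simp only [Set.mem_setOf_eq, Set.mem_empty_iff_false, iff_false]
        intro hx
        rw [hsymm, hS, Set.mem_setOf_eq] at hx
        refine hw ?_
        intro k _
        have := hx.1 (j.succAbove k)
        rwa [Fin.insertNth_apply_succAbove] at this
      rw [hempty, measure_empty]
  calc volume S = (volume : Measure (ℝ × (Fin d' → ℝ))) (e.symm ⁻¹' S) := hkey
    _ = ∫⁻ w, volume ((fun x => (x, w)) ⁻¹' (e.symm ⁻¹' S)) ∂volume := by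
        rw [Measure.volume_eq_prod, Measure.prod_apply_symm (e.symm.measurable hSmeas)]
    _ ≤ ∫⁻ w, Set.indicator (Set.pi Set.univ fun _ : Fin d' => Set.Icc (1:ℝ) 2)
          (fun _ => ENNReal.ofReal δ) w ∂volume := lintegral_mono fun w => hslice w
    _ = ENNReal.ofReal δ * volume (Set.pi Set.univ fun _ : Fin d' => Set.Icc (1:ℝ) 2) := by
        rw [lintegral_indicator hcube, setLIntegral_const]
    _ = ENNReal.ofReal δ := by
        rw [volume_pi_pi]
        norm_num [Real.volume_Icc]

theorem stmt_2 (d : ℕ) (hd : 1 ≤ d) (m : ℝ) (hm : 0 < m) :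
    ∃ C > 0, ∀ δ : ℝ, 0 < δ → δ < m → ∀ N : ℕ, 1 ≤ N →
      volume {ν : Fin d → ℝ | (∀ i, ν i ∈ Set.Icc (1 : ℝ) 2) ∧
        ∃ n : Fin d → ℤ, (∀ i, |n i| ≤ (N : ℤ)) ∧
          |∑ i, (ν i) ^ 2 * (n i : ℝ) ^ 2 - m| ≤ δ}
      ≤ ENNReal.ofReal (C * (N : ℝ) ^ d * Real.sqrt δ) := by
  obtain ⟨d', rfl⟩ : ∃ d', d = d' + 1 := ⟨d - 1, (Nat.succ_pred_eq_of_pos hd).symm⟩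
  refine ⟨3 ^ (d' + 1) * Real.sqrt m, by positivity, ?_⟩
  intro δ hδ hδm N hN
  set F := Fintype.piFinset (fun _ : Fin (d' + 1) => Finset.Icc (-(N:ℤ)) (N:ℤ)) with hF
  set S : (Fin (d' + 1) → ℤ) → Set (Fin (d' + 1) → ℝ) := fun n =>
    {ν | (∀ i, ν i ∈ Set.Icc (1 : ℝ) 2) ∧ |∑ i, (ν i) ^ 2 * (n i : ℝ) ^ 2 - m| ≤ δ} with hSdef
  have hsub : {ν : Fin (d' + 1) → ℝ | (∀ i, ν i ∈ Set.Icc (1 : ℝ) 2) ∧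
      ∃ n : Fin (d' + 1) → ℤ, (∀ i, |n i| ≤ (N : ℤ)) ∧
        |∑ i, (ν i) ^ 2 * (n i : ℝ) ^ 2 - m| ≤ δ} ⊆ ⋃ n ∈ F, S n := by
    rintro ν ⟨h1, n, hn, h2⟩
    have hnF : n ∈ F := by
      rw [hF, Fintype.mem_piFinset]
      intro i
      rw [Finset.mem_Icc]
      exact abs_le.mp (hn i)
    exact Set.mem_iUnion₂.mpr ⟨n, hnF, ⟨h1, h2⟩⟩
  have hbound : ∀ n ∈ F, volume (S n) ≤ ENNReal.ofReal δ := by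
    intro n _
    by_cases hn0 : ∃ j, n j ≠ 0
    · obtain ⟨j, hj⟩ := hn0
      exact aux_slice d' m δ hδ n j hj
    · push_neg at hn0
      have hSe : S n = ∅ := by
        ext ν
        simp only [hSdef, Set.mem_setOf_eq, Set.mem_empty_iff_false, iff_false, not_and]
        intro _ h2
        rw [show ∑ i, (ν i) ^ 2 * (n i : ℝ) ^ 2 = 0 by
          apply Finset.sum_eq_zero; intro i _; rw [hn0 i]; norm_num] at h2
        rw [abs_sub_comm, sub_zero, abs_of_pos hm] at h2
        linarith
      rw [hSe, measure_empty]
      exact zero_le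
  have hIcc : (Finset.Icc (-(N:ℤ)) (N:ℤ)).card = 2 * N + 1 := by
    rw [Int.card_Icc]; omega
  have hcardN : F.card = (2 * N + 1) ^ (d' + 1) := by
    rw [hF, Fintype.card_piFinset]
    simp [hIcc]
  have hN1 : (1:ℝ) ≤ (N:ℝ) := by exact_mod_cast hN
  have hreal : ((F.card : ℝ)) * δ ≤
      3 ^ (d' + 1) * Real.sqrt m * (N:ℝ) ^ (d' + 1) * Real.sqrt δ := by
    have hcR : (F.card : ℝ) = ((2 * N + 1 : ℕ) : ℝ) ^ (d' + 1) := by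
      rw [hcardN]; push_cast; ring
    have h1 : ((2 * N + 1 : ℕ) : ℝ) ≤ 3 * (N:ℝ) := by push_cast; linarith
    have h2 : ((2 * N + 1 : ℕ) : ℝ) ^ (d' + 1) ≤ (3 * (N:ℝ)) ^ (d' + 1) :=
      pow_le_pow_left₀ (by positivity) h1 _
    have h3 : δ ≤ Real.sqrt m * Real.sqrt δ := by
      nlinarith [Real.mul_self_sqrt hδ.le, Real.sqrt_le_sqrt hδm.le, Real.sqrt_nonneg δ,
        Real.sqrt_nonneg m]
    calc (F.card : ℝ) * δ = ((2 * N + 1 : ℕ) : ℝ) ^ (d' + 1) * δ := by rw [hcR]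
      _ ≤ (3 * (N:ℝ)) ^ (d' + 1) * (Real.sqrt m * Real.sqrt δ) :=
          mul_le_mul h2 h3 hδ.le (by positivity)
      _ = 3 ^ (d' + 1) * Real.sqrt m * (N:ℝ) ^ (d' + 1) * Real.sqrt δ := by
          rw [mul_pow]; ring
  refine le_trans (measure_mono hsub) ?_
  calc volume (⋃ n ∈ F, S n) ≤ ∑ n ∈ F, volume (S n) := measure_biUnion_finset_le F S
    _ ≤ ∑ n ∈ F, ENNReal.ofReal δ := Finset.sum_le_sum hbound
    _ = (F.card : ENNReal) * ENNReal.ofReal δ := by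
        rw [Finset.sum_const, nsmul_eq_mul]
    _ = ENNReal.ofReal ((F.card : ℝ) * δ) := by
        rw [ENNReal.ofReal_mul (by positivity), ENNReal.ofReal_natCast]
    _ ≤ ENNReal.ofReal (3 ^ (d' + 1) * Real.sqrt m * (N:ℝ) ^ (d' + 1) * Real.sqrt δ) :=
        ENNReal.ofReal_le_ofReal hreal
end

section
/- Let m > 0 and δ > 0. For each fixed nonzero n ∈ ℤ^d, the Lebesgue measure of the set of ν ∈ [1,2]^d such that |∑_{i=1}^d ν_i² n_i² − m| < δ is at most C·δ, where C depends only on d (in fact C·δ/max_i n_i² suffices when n ≠ 0). -/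
open MeasureTheory

lemma slice_bound (c B δ : ℝ) (hc : 1 ≤ c) (hδ : 0 < δ) :
    volume {x : ℝ | x ∈ Set.Icc (1:ℝ) 2 ∧ |x ^ 2 * c - B| < δ} ≤ ENNReal.ofReal δ := by
  set L : ℝ := max 1 ((B - δ) / c) with hLdef
  have hL1 : (1:ℝ) ≤ L := le_max_left _ _
  have hL0 : (0:ℝ) ≤ L := by linarith
  have hsL : 1 ≤ Real.sqrt L := by
    rw [show (1:ℝ) = Real.sqrt 1 by simp]
    exact Real.sqrt_le_sqrt hL1
  have hsub : {x : ℝ | x ∈ Set.Icc (1:ℝ) 2 ∧ |x ^ 2 * c - B| < δ} ⊆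
      Set.Icc (Real.sqrt L) (Real.sqrt L + δ) := by
    rintro x ⟨⟨hx1, hx2⟩, habs⟩
    rw [abs_lt] at habs
    have hc0 : (0:ℝ) < c := lt_of_lt_of_le one_pos hc
    have h1 : (B - δ)/c < x ^ 2 := by
      rw [div_lt_iff₀ hc0]; nlinarith [habs.1]
    have h1' : (1:ℝ) ≤ x ^ 2 := by nlinarith
    have hLx : L ≤ x ^ 2 := max_le h1' h1.le
    have h2 : x ^ 2 < L + 2 * δ := by
      have : x ^ 2 * c < B + δ := by linarith [habs.2]
      have h3 : x ^ 2 < (B - δ)/c + 2 * δ / c := by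
        rw [← add_div, lt_div_iff₀ hc0]; linarith
      have h4 : 2 * δ / c ≤ 2 * δ := by
        rw [div_le_iff₀ hc0]; nlinarith
      have h5 : (B - δ)/c ≤ L := le_max_right _ _
      linarith
    constructor
    · calc Real.sqrt L ≤ Real.sqrt (x ^ 2) := Real.sqrt_le_sqrt hLx
        _ = x := by rw [Real.sqrt_sq (by linarith)]
    · have hsq : Real.sqrt L ^ 2 = L := Real.sq_sqrt hL0
      nlinarith [hsL, hδ]
  calc volume {x : ℝ | x ∈ Set.Icc (1:ℝ) 2 ∧ |x ^ 2 * c - B| < δ}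
      ≤ volume (Set.Icc (Real.sqrt L) (Real.sqrt L + δ)) := measure_mono hsub
    _ = ENNReal.ofReal δ := by rw [Real.volume_Icc]; ring_nf

theorem stmt_3 (d : ℕ) :
    ∃ C > 0, ∀ m : ℝ, 0 < m → ∀ δ : ℝ, 0 < δ → ∀ n : Fin d → ℤ, n ≠ 0 →
      volume {ν : Fin d → ℝ | (∀ i, ν i ∈ Set.Icc (1 : ℝ) 2) ∧
        |∑ i, (ν i) ^ 2 * (n i : ℝ) ^ 2 - m| < δ}
      ≤ ENNReal.ofReal (C * δ) := by
  refine ⟨1, one_pos, ?_⟩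
  intro m hm δ hδ n hn
  rw [one_mul]
  match d with
  | 0 =>
    exact absurd (funext fun i => absurd i.2 (by simp)) hn
  | d' + 1 =>
  obtain ⟨i0, hi0⟩ : ∃ i, n i ≠ 0 := by
    by_contra h; push_neg at h; exact hn (funext fun i => h i)
  set S := {ν : Fin (d'+1) → ℝ | (∀ i, ν i ∈ Set.Icc (1 : ℝ) 2) ∧
        |∑ i, (ν i) ^ 2 * (n i : ℝ) ^ 2 - m| < δ} with hSdef
  have hSm : MeasurableSet S := by
    have h1 : MeasurableSet {ν : Fin (d'+1) → ℝ | ∀ i, ν i ∈ Set.Icc (1:ℝ) 2} := by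
      have heq : {ν : Fin (d'+1) → ℝ | ∀ i, ν i ∈ Set.Icc (1:ℝ) 2}
          = Set.pi Set.univ (fun _ => Set.Icc (1:ℝ) 2) := by
        ext ν; simp only [Set.mem_setOf_eq, Set.mem_pi, Set.mem_univ, forall_true_left,
          true_implies]
      rw [heq]; exact MeasurableSet.univ_pi fun _ => measurableSet_Icc
    have hmeas : Measurable fun ν : Fin (d'+1) → ℝ =>
        |∑ i, (ν i) ^ 2 * (n i : ℝ) ^ 2 - m| := by
      apply Measurable.abs
      apply Measurable.sub _ measurable_const
      exact Finset.measurable_sum _ fun i _ =>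
        ((measurable_pi_apply i).pow_const 2).mul_const _
    exact h1.inter (hmeas measurableSet_Iio)
  set e := MeasurableEquiv.piFinSuccAbove (fun _ : Fin (d'+1) => ℝ) i0 with hedef
  have hmp := measurePreserving_piFinSuccAbove (fun _ : Fin (d'+1) => (volume : Measure ℝ)) i0
  have hT : MeasurableSet (e.symm ⁻¹' S) := e.symm.measurable hSm
  have hvol : volume S =
      ((volume : Measure ℝ).prod (Measure.pi fun _ : Fin d' => volume)) (e.symm ⁻¹' S) := by
    have := hmp.measure_preimage hT.nullMeasurableSet
    rw [show e ⁻¹' (e.symm ⁻¹' S) = S by ext x; simp] at this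
    rw [← this, MeasureTheory.volume_pi]
  rw [hvol, Measure.prod_apply_symm hT]
  have hbound : ∀ y : Fin d' → ℝ,
      volume ((fun x => (x, y)) ⁻¹' (e.symm ⁻¹' S)) ≤
        Set.indicator (Set.pi Set.univ fun _ : Fin d' => Set.Icc (1:ℝ) 2)
          (fun _ => ENNReal.ofReal δ) y := by
    intro y
    have hslice : ∀ x : ℝ, ((x, y) ∈ e.symm ⁻¹' S) ↔
        ((x ∈ Set.Icc (1:ℝ) 2 ∧ ∀ j, y j ∈ Set.Icc (1:ℝ) 2) ∧
          |x ^ 2 * (n i0 : ℝ) ^ 2 +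
            ∑ j, (y j) ^ 2 * (n (i0.succAbove j) : ℝ) ^ 2 - m| < δ) := by
      intro x
      have hins : e.symm (x, y) = i0.insertNth x y := rfl
      simp only [Set.mem_preimage, hins, hSdef, Set.mem_setOf_eq]
      rw [Fin.forall_iff_succAbove i0, Fin.sum_univ_succAbove _ i0]
      simp [Fin.insertNth_apply_same, Fin.insertNth_apply_succAbove]
    by_cases hy : y ∈ Set.pi Set.univ fun _ : Fin d' => Set.Icc (1:ℝ) 2
    · rw [Set.indicator_of_mem hy]
      have hsub : ((fun x => (x, y)) ⁻¹' (e.symm ⁻¹' S)) ⊆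
          {x : ℝ | x ∈ Set.Icc (1:ℝ) 2 ∧
            |x ^ 2 * (n i0 : ℝ) ^ 2 -
              (m - ∑ j, (y j) ^ 2 * (n (i0.succAbove j) : ℝ) ^ 2)| < δ} := by
        intro x hx
        rw [Set.mem_preimage, hslice] at hx
        refine ⟨hx.1.1, ?_⟩
        have := hx.2
        rw [show x ^ 2 * (n i0 : ℝ) ^ 2 -
            (m - ∑ j, (y j) ^ 2 * (n (i0.succAbove j) : ℝ) ^ 2)
          = x ^ 2 * (n i0 : ℝ) ^ 2 +
            ∑ j, (y j) ^ 2 * (n (i0.succAbove j) : ℝ) ^ 2 - m by ring]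
        exact this
      have hc : (1:ℝ) ≤ (n i0 : ℝ) ^ 2 := by
        have : (1:ℤ) ≤ (n i0) ^ 2 := by
          rcases lt_or_gt_of_ne hi0 with h | h <;> nlinarith
        exact_mod_cast this
      exact le_trans (measure_mono hsub) (slice_bound _ _ δ hc hδ)
    · rw [Set.indicator_of_notMem hy]
      have : ((fun x => (x, y)) ⁻¹' (e.symm ⁻¹' S)) = ∅ := by
        ext x
        rw [Set.mem_preimage, hslice]
        simp only [Set.mem_empty_iff_false, iff_false]
        rintro ⟨⟨_, h2⟩, _⟩
        exact hy (fun j _ => h2 j)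
      simp [this]
  calc ∫⁻ y, volume ((fun x => (x, y)) ⁻¹' (e.symm ⁻¹' S))
          ∂(Measure.pi fun _ : Fin d' => volume)
      ≤ ∫⁻ y, Set.indicator (Set.pi Set.univ fun _ : Fin d' => Set.Icc (1:ℝ) 2)
          (fun _ => ENNReal.ofReal δ) y ∂(Measure.pi fun _ : Fin d' => volume) :=
        lintegral_mono hbound
    _ = ENNReal.ofReal δ * (Measure.pi fun _ : Fin d' => volume)
          (Set.pi Set.univ fun _ : Fin d' => Set.Icc (1:ℝ) 2) := by
        rw [lintegral_indicator (MeasurableSet.univ_pi fun _ => measurableSet_Icc)]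
        simp [mul_comm]
    _ ≤ ENNReal.ofReal δ := by
        rw [Measure.pi_pi]
        norm_num [Real.volume_Icc]
end
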